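/- Let n ≥ 4 and 0 < p_a < 1. If the arc random digraph D(n,p_a) is represented as a vertex-arc random digraph D(n,Ω,μ,φ), i.e., p_a^{|A(D)|}(1−p_a)^{n(n−1)−|A(D)|} = ∫ ∏_{(i,j)∈A(D)} φ(x_i,x_j) · ∏_{(i,j)∉A(D), i≠j} (1 − φ(x_i,x_j)) dμⁿ(x) holds for every digraph D on [n], then φ(x,y) = p_a for μ×μ-almost every (x,y) ∈ Ω × Ω. -/

import Mathlib

open MeasureTheory Finset

/-- A finset of ordered pairs is (the arc set of) a digraph on `Fin n` if it has no loops. -/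
def IsDigraph {n : ℕ} (A : Finset (Fin n × Fin n)) : Prop := ∀ p ∈ A, p.1 ≠ p.2

/-- The probability that the vertex-arc random digraph `D(n, Ω, μ, φ)` equals the digraph
with arc set `A`. -/
noncomputable def vardP {Ω : Type*} [MeasurableSpace Ω] (μ : Measure Ω) {n : ℕ}
    (φ : Ω → Ω → ℝ) (A : Finset (Fin n × Fin n)) : ℝ :=
  ∫ x : Fin n → Ω,
    (∏ p ∈ A, φ (x p.1) (x p.2)) *
      ∏ p ∈ Finset.univ.filter (fun p : Fin n × Fin n => p.1 ≠ p.2 ∧ p ∉ A),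
        (1 - φ (x p.1) (x p.2)) ∂(Measure.pi fun _ : Fin n => μ)

lemma cardL (n : ℕ) : (univ.filter (fun p : Fin n × Fin n => p.1 ≠ p.2)).card = n * (n-1) := by
  classical
  have h1 : (univ.filter (fun p : Fin n × Fin n => p.1 = p.2)) = univ.image (fun i : Fin n => (i,i)) := by
    ext p; simp only [mem_filter, mem_univ, true_and, mem_image]
    constructor
    · intro h; refine ⟨p.1, ?_⟩; conv_rhs => rw [← Prod.mk.eta (p := p), ← h]
    · rintro ⟨i, rfl⟩; rfl
  have h2 : (univ.filter (fun p : Fin n × Fin n => p.1 = p.2)).card = n := by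
    rw [h1, Finset.card_image_of_injective _ (fun a b h => congrArg Prod.fst h)]
    simp
  have h3 := Finset.card_filter_add_card_filter_not
    (s := (univ : Finset (Fin n × Fin n))) (p := fun p => p.1 = p.2)
  have h4 : (univ : Finset (Fin n × Fin n)).card = n * n := by simp
  have h5 : (univ.filter (fun p : Fin n × Fin n => ¬ p.1 = p.2)).card = n*n - n := by omega
  have h6 : n * (n - 1) = n * n - n := by
    cases n with
    | zero => simp
    | succ m => simp [Nat.succ_sub_one, Nat.mul_succ, Nat.succ_mul]
  rw [h6, ← h5]

set_option linter.unusedSectionVars false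

section Aux

variable {Ω : Type*} [MeasurableSpace Ω] {μ : Measure Ω} [IsProbabilityMeasure μ]
variable {φ : Ω → Ω → ℝ}

lemma integrable_of_bdd {α : Type*} [MeasurableSpace α] {ν : Measure α} [IsFiniteMeasure ν]
    {F : α → ℝ} (hF : Measurable F) (hb : ∀ x, |F x| ≤ 1) : Integrable F ν :=
  (integrable_const 1).mono' hF.aestronglyMeasurable (ae_of_all _ fun x => by simpa using hb x)

lemma meas_phi_pi (hmeas : Measurable (Function.uncurry φ)) {k : ℕ} (i j : Fin k) :
    Measurable fun y : Fin k → Ω => φ (y i) (y j) :=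
  hmeas.comp ((measurable_pi_apply i).prodMk (measurable_pi_apply j) :
    Measurable fun y : Fin k → Ω => (y i, y j))

lemma prodAux_meas (hmeas : Measurable (Function.uncurry φ)) {k : ℕ}
    (P Q : Finset (Fin k × Fin k)) :
    Measurable fun y : Fin k → Ω =>
      (∏ p ∈ P, φ (y p.1) (y p.2)) * ∏ p ∈ Q, (1 - φ (y p.1) (y p.2)) := by
  apply Measurable.mul
  · exact Finset.measurable_prod _ fun p _ => meas_phi_pi hmeas p.1 p.2
  · exact Finset.measurable_prod _ fun p _ => (measurable_const.sub (meas_phi_pi hmeas p.1 p.2))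

lemma prodAux_mem (hφ : ∀ x y, φ x y ∈ Set.Icc (0:ℝ) 1) {k : ℕ}
    (P Q : Finset (Fin k × Fin k)) (y : Fin k → Ω) :
    (∏ p ∈ P, φ (y p.1) (y p.2)) * ∏ p ∈ Q, (1 - φ (y p.1) (y p.2)) ∈ Set.Icc (0:ℝ) 1 := by
  have h1 : ∀ p : Fin k × Fin k, (0:ℝ) ≤ φ (y p.1) (y p.2) := fun p => (hφ _ _).1
  have h2 : ∀ p : Fin k × Fin k, φ (y p.1) (y p.2) ≤ 1 := fun p => (hφ _ _).2
  constructor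
  · exact mul_nonneg (Finset.prod_nonneg fun p _ => h1 p)
      (Finset.prod_nonneg fun p _ => by linarith [h2 p])
  · exact mul_le_one₀
      (Finset.prod_le_one (fun p _ => h1 p) (fun p _ => h2 p))
      (Finset.prod_nonneg fun p _ => by linarith [h2 p])
      (Finset.prod_le_one (fun p _ => by linarith [h2 p]) (fun p _ => by linarith [h1 p]))

lemma prodAux_integrable (hmeas : Measurable (Function.uncurry φ))
    (hφ : ∀ x y, φ x y ∈ Set.Icc (0:ℝ) 1) {k : ℕ} (P Q : Finset (Fin k × Fin k)) :
    Integrable (fun y : Fin k → Ω =>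
      (∏ p ∈ P, φ (y p.1) (y p.2)) * ∏ p ∈ Q, (1 - φ (y p.1) (y p.2)))
      (Measure.pi fun _ : Fin k => μ) :=
  integrable_of_bdd (prodAux_meas hmeas P Q) (fun y => by
    have := prodAux_mem hφ P Q y
    rw [abs_le]; exact ⟨by linarith [this.1], this.2⟩)

lemma momentPi {n : ℕ}
    (hmeas : Measurable (Function.uncurry φ)) (hφ : ∀ x y, φ x y ∈ Set.Icc (0:ℝ) 1)
    {pa : ℝ}
    (hrep : ∀ A : Finset (Fin n × Fin n), IsDigraph A →
      pa ^ A.card * (1 - pa) ^ (n * (n - 1) - A.card) = vardP μ φ A)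
    (S : Finset (Fin n × Fin n)) (hS : IsDigraph S) :
    ∫ x : Fin n → Ω, ∏ p ∈ S, φ (x p.1) (x p.2) ∂(Measure.pi fun _ : Fin n => μ)
      = pa ^ S.card := by
  classical
  set L : Finset (Fin n × Fin n) := univ.filter (fun p => p.1 ≠ p.2) with hLdef
  have hmemL : ∀ p : Fin n × Fin n, p ∈ L ↔ p.1 ≠ p.2 := fun p => by simp [hLdef]
  have hSL : S ⊆ L := fun p hp => (hmemL p).mpr (hS p hp)
  have hcardL : L.card = n * (n - 1) := cardL n
  set T : Finset (Fin n × Fin n) := L \ S with hTdef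
  have hTL : T ⊆ L := Finset.sdiff_subset
  have hST : T.card + S.card = L.card := Finset.card_sdiff_add_card_eq_card hSL
  have key : ∀ A ∈ T.powerset,
      pa ^ S.card * (pa ^ A.card * (1-pa) ^ (T \ A).card)
        = ∫ x : Fin n → Ω, (∏ p ∈ S, φ (x p.1) (x p.2)) *
            ((∏ p ∈ A, φ (x p.1) (x p.2)) * ∏ p ∈ T \ A, (1 - φ (x p.1) (x p.2)))
          ∂(Measure.pi fun _ : Fin n => μ) := by
    intro A hA
    rw [Finset.mem_powerset] at hA
    have hAL : A ⊆ L := hA.trans hTL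
    have hdisj : Disjoint S A := by
      have : Disjoint S T := Finset.disjoint_sdiff
      exact this.mono_right hA
    have hcard : (S ∪ A).card = S.card + A.card := Finset.card_union_of_disjoint hdisj
    have hdig : IsDigraph (S ∪ A) := by
      intro p hp; rcases Finset.mem_union.mp hp with h | h
      · exact hS p h
      · exact (hmemL p).mp (hAL h)
    have h1 := hrep (S ∪ A) hdig
    have hfilter : univ.filter (fun p : Fin n × Fin n => p.1 ≠ p.2 ∧ p ∉ S ∪ A) = T \ A := by
      ext p
      simp only [mem_filter, mem_univ, true_and, hTdef, Finset.mem_sdiff, Finset.mem_union,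
        hmemL]
      tauto
    have hAT : A.card ≤ T.card := Finset.card_le_card hA
    have hsdiffcard : (T \ A).card = T.card - A.card := Finset.card_sdiff_of_subset hA
    have hexp : n * (n-1) - (S ∪ A).card = (T \ A).card := by
      rw [hcard, hsdiffcard, ← hcardL]; omega
    rw [vardP, hfilter, hexp, hcard, pow_add] at h1
    simp only [Finset.prod_union hdisj] at h1
    simp only [mul_assoc] at h1 ⊢
    exact h1
  have hone : ∀ x : Fin n → Ω,
      (∑ A ∈ T.powerset, (∏ p ∈ A, φ (x p.1) (x p.2)) * ∏ p ∈ T \ A, (1 - φ (x p.1) (x p.2)))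
        = 1 := by
    intro x
    rw [← Finset.prod_add]
    calc ∏ p ∈ T, (φ (x p.1) (x p.2) + (1 - φ (x p.1) (x p.2)))
        = ∏ p ∈ T, (1:ℝ) := Finset.prod_congr rfl (fun p _ => by ring)
      _ = 1 := Finset.prod_const_one
  have hsum1 : (∑ A ∈ T.powerset, pa ^ A.card * (1-pa) ^ (T \ A).card) = 1 := by
    calc ∑ A ∈ T.powerset, pa ^ A.card * (1-pa) ^ (T \ A).card
        = ∑ A ∈ T.powerset, (∏ _p ∈ A, pa) * ∏ _p ∈ T \ A, (1-pa) := by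
          refine Finset.sum_congr rfl fun A _ => ?_
          rw [Finset.prod_const, Finset.prod_const]
      _ = ∏ _p ∈ T, (pa + (1 - pa)) := (Finset.prod_add (fun _ => pa) (fun _ => 1 - pa) T).symm
      _ = ∏ _p ∈ T, (1:ℝ) := Finset.prod_congr rfl (fun p _ => by ring)
      _ = 1 := Finset.prod_const_one
  calc ∫ x : Fin n → Ω, ∏ p ∈ S, φ (x p.1) (x p.2) ∂(Measure.pi fun _ : Fin n => μ)
      = ∫ x : Fin n → Ω, ∑ A ∈ T.powerset, (∏ p ∈ S, φ (x p.1) (x p.2)) *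
          ((∏ p ∈ A, φ (x p.1) (x p.2)) * ∏ p ∈ T \ A, (1 - φ (x p.1) (x p.2)))
          ∂(Measure.pi fun _ : Fin n => μ) := by
        apply integral_congr_ae; apply ae_of_all; intro x
        simp only [← Finset.mul_sum]
        rw [hone x, mul_one]
    _ = ∑ A ∈ T.powerset, ∫ x : Fin n → Ω, (∏ p ∈ S, φ (x p.1) (x p.2)) *
          ((∏ p ∈ A, φ (x p.1) (x p.2)) * ∏ p ∈ T \ A, (1 - φ (x p.1) (x p.2)))
          ∂(Measure.pi fun _ : Fin n => μ) := by
        apply integral_finset_sum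
        intro A hA
        rw [Finset.mem_powerset] at hA
        have hdisj : Disjoint S A := Finset.disjoint_sdiff.mono_right hA
        exact (prodAux_integrable hmeas hφ (S ∪ A) (T \ A)).congr
          (ae_of_all _ fun x => by simp only [Finset.prod_union hdisj, mul_assoc])
    _ = ∑ A ∈ T.powerset, pa ^ S.card * (pa ^ A.card * (1-pa) ^ (T \ A).card) := by
        exact (Finset.sum_congr rfl key).symm
    _ = pa ^ S.card := by rw [← Finset.mul_sum, hsum1, mul_one]

end Aux
set_option linter.unusedSectionVars false

section Aux2
variable {Ω : Type*} [MeasurableSpace Ω] {μ : Measure Ω} [IsProbabilityMeasure μ]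

lemma map_pi_comp {n k : ℕ} (ι : Fin k → Fin n) (hι : Function.Injective ι) :
    MeasurePreserving (fun x : Fin n → Ω => x ∘ ι)
      (Measure.pi fun _ : Fin n => μ) (Measure.pi fun _ : Fin k => μ) := by
  classical
  have hm : Measurable (fun x : Fin n → Ω => x ∘ ι) :=
    measurable_pi_lambda _ (fun i => measurable_pi_apply (ι i))
  refine ⟨hm, ?_⟩
  refine (Measure.pi_eq fun B hB => ?_).symm
  rw [Measure.map_apply hm (MeasurableSet.univ_pi hB)]
  have hpre : (fun x : Fin n → Ω => x ∘ ι) ⁻¹' (Set.pi Set.univ B)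
      = Set.pi Set.univ (fun j : Fin n =>
          if h : ∃ i, ι i = j then B h.choose else Set.univ) := by
    ext x
    simp only [Set.mem_preimage, Set.mem_pi, Set.mem_univ, true_implies, Function.comp_apply]
    constructor
    · intro hx j
      by_cases h : ∃ i, ι i = j
      · rw [dif_pos h]
        have hc := hx h.choose
        rwa [h.choose_spec] at hc
      · rw [dif_neg h]; trivial
    · intro hx i
      have h : ∃ i', ι i' = ι i := ⟨i, rfl⟩
      have := hx (ι i)
      rw [dif_pos h] at this
      rwa [hι h.choose_spec] at this
  rw [hpre, Measure.pi_pi]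
  calc ∏ j : Fin n, μ (if h : ∃ i, ι i = j then B h.choose else Set.univ)
      = ∏ j ∈ Finset.univ.image ι, μ (if h : ∃ i, ι i = j then B h.choose else Set.univ) := by
        refine (Finset.prod_subset (Finset.subset_univ _) (fun j _ hj => ?_)).symm
        rw [dif_neg, measure_univ]
        intro h
        exact hj (Finset.mem_image.mpr ⟨h.choose, Finset.mem_univ _, h.choose_spec⟩)
    _ = ∏ i : Fin k, μ (if h : ∃ i', ι i' = ι i then B h.choose else Set.univ) :=
        Finset.prod_image (fun a _ b _ h => hι h)
    _ = ∏ i : Fin k, μ (B i) := by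
        refine Finset.prod_congr rfl fun i _ => ?_
        have h : ∃ i', ι i' = ι i := ⟨i, rfl⟩
        rw [dif_pos h, hι h.choose_spec]

lemma integral_pi_peel {k : ℕ} (F : (Fin (k+1) → Ω) → ℝ)
    (hF : Integrable F (Measure.pi fun _ : Fin (k+1) => μ)) :
    ∫ x, F x ∂(Measure.pi fun _ : Fin (k+1) => μ)
      = ∫ a, ∫ y : Fin k → Ω, F (Fin.cons a y) ∂(Measure.pi fun _ : Fin k => μ) ∂μ := by
  have mp := measurePreserving_piFinSuccAbove (fun _ : Fin (k+1) => μ) 0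
  rw [← (MeasurePreserving.symm _ mp).integral_comp']
  have hInt : Integrable (fun z : Ω × (Fin k → Ω) =>
      F ((MeasurableEquiv.piFinSuccAbove (fun _ : Fin (k+1) => Ω) 0).symm z))
      (μ.prod (Measure.pi fun _ : Fin k => μ)) :=
    (MeasurePreserving.symm _ mp).integrable_comp_emb
      (MeasurableEquiv.measurableEmbedding _) |>.mpr hF
  rw [integral_prod _ hInt]
  refine integral_congr_ae (ae_of_all _ fun a => ?_)
  refine integral_congr_ae (ae_of_all _ fun y => ?_)
  congr 1
  simp [MeasurableEquiv.piFinSuccAbove_symm_apply, Fin.insertNthEquiv, Fin.insertNth_zero]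

lemma integral_pi_one (G : Ω → ℝ) :
    ∫ y : Fin 1 → Ω, G (y 0) ∂(Measure.pi fun _ : Fin 1 => μ) = ∫ z, G z ∂μ := by
  have mp := measurePreserving_funUnique μ (Fin 1)
  rw [← mp.integral_comp']
  rfl

end Aux2

section Aux3
variable {Ω : Type*} [MeasurableSpace Ω] {μ : Measure Ω} [IsProbabilityMeasure μ]
variable {φ : Ω → Ω → ℝ}

lemma momentK {n k : ℕ} (hkn : k ≤ n)
    (hmeas : Measurable (Function.uncurry φ)) (hφ : ∀ x y, φ x y ∈ Set.Icc (0:ℝ) 1)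
    {pa : ℝ}
    (hrep : ∀ A : Finset (Fin n × Fin n), IsDigraph A →
      pa ^ A.card * (1 - pa) ^ (n * (n - 1) - A.card) = vardP μ φ A)
    (S' : Finset (Fin k × Fin k)) (hS' : IsDigraph S') :
    ∫ y : Fin k → Ω, ∏ p ∈ S', φ (y p.1) (y p.2) ∂(Measure.pi fun _ : Fin k => μ)
      = pa ^ S'.card := by
  classical
  set ι : Fin k → Fin n := Fin.castLE hkn with hι_def
  have hι : Function.Injective ι := Fin.castLE_injective hkn
  have hinj2 : Function.Injective (Prod.map ι ι) := Function.Injective.prodMap hι hι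
  set S : Finset (Fin n × Fin n) := S'.image (Prod.map ι ι) with hSdef
  have hSdig : IsDigraph S := by
    intro p hp
    rcases Finset.mem_image.mp hp with ⟨q, hq, rfl⟩
    exact fun h => hS' q hq (hι h)
  have hcard : S.card = S'.card := Finset.card_image_of_injective _ hinj2
  have hmap := map_pi_comp (μ := μ) ι hι
  calc ∫ y : Fin k → Ω, ∏ p ∈ S', φ (y p.1) (y p.2) ∂(Measure.pi fun _ : Fin k => μ)
      = ∫ y : Fin k → Ω, ∏ p ∈ S', φ (y p.1) (y p.2)
          ∂(Measure.map (fun x : Fin n → Ω => x ∘ ι) (Measure.pi fun _ : Fin n => μ)) := by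
        rw [hmap.map_eq]
    _ = ∫ x : Fin n → Ω, ∏ p ∈ S', φ ((x ∘ ι) p.1) ((x ∘ ι) p.2)
          ∂(Measure.pi fun _ : Fin n => μ) := by
        exact integral_map hmap.measurable.aemeasurable
          (Finset.measurable_prod _ fun p _ => meas_phi_pi hmeas p.1 p.2).aestronglyMeasurable
    _ = ∫ x : Fin n → Ω, ∏ p ∈ S, φ (x p.1) (x p.2) ∂(Measure.pi fun _ : Fin n => μ) := by
        refine integral_congr_ae (ae_of_all _ fun x => ?_)
        exact (Finset.prod_image (f := fun q : Fin n × Fin n => φ (x q.1) (x q.2))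
          (g := Prod.map ι ι) (fun a _ b _ h => hinj2 h)).symm
    _ = pa ^ S.card := momentPi hmeas hφ hrep S hSdig
    _ = pa ^ S'.card := by rw [hcard]

end Aux3
section Aux4
variable {Ω : Type*} [MeasurableSpace Ω] {μ : Measure Ω} [IsProbabilityMeasure μ]
variable {φ : Ω → Ω → ℝ} {n : ℕ} {pa : ℝ}

lemma abs_le_one_of_Icc {t : ℝ} (h : t ∈ Set.Icc (0:ℝ) 1) : |t| ≤ 1 :=
  abs_le.mpr ⟨by linarith [h.1], h.2⟩

lemma Icc01_mul {a b : ℝ} (ha : a ∈ Set.Icc (0:ℝ) 1) (hb : b ∈ Set.Icc (0:ℝ) 1) :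
    a * b ∈ Set.Icc (0:ℝ) 1 :=
  ⟨mul_nonneg ha.1 hb.1, mul_le_one₀ ha.2 hb.1 hb.2⟩

lemma int_of_Icc {α : Type*} [MeasurableSpace α] {ν : Measure α} [IsFiniteMeasure ν] {F : α → ℝ}
    (hm : Measurable F) (h : ∀ x, F x ∈ Set.Icc (0:ℝ) 1) : Integrable F ν :=
  integrable_of_bdd hm (fun x => abs_le_one_of_Icc (h x))

lemma meas_phi_left (hmeas : Measurable (Function.uncurry φ)) (a : Ω) : Measurable (φ a) :=
  hmeas.comp measurable_prodMk_left

lemma meas_phi_pi_left (hmeas : Measurable (Function.uncurry φ)) (a : Ω) {k : ℕ} (i : Fin k) :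
    Measurable fun y : Fin k → Ω => φ a (y i) :=
  (meas_phi_left hmeas a).comp (measurable_pi_apply i)

variable (hmeas : Measurable (Function.uncurry φ)) (hφ : ∀ x y, φ x y ∈ Set.Icc (0:ℝ) 1)
variable (hrep : ∀ A : Finset (Fin n × Fin n), IsDigraph A →
      pa ^ A.card * (1 - pa) ^ (n * (n - 1) - A.card) = vardP μ φ A)

include hmeas hφ hrep

lemma mom_f (hn : 2 ≤ n) : ∫ a, (∫ z, φ a z ∂μ) ∂μ = pa := by
  have h2 := momentK (n := n) hn hmeas hφ hrep {((0 : Fin 2), (1 : Fin 2))}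
    (show ∀ p ∈ ({((0 : Fin 2), (1 : Fin 2))} : Finset _), p.1 ≠ p.2 by decide)
  simp only [Finset.prod_singleton, Finset.card_singleton, pow_one] at h2
  have hi1 : Integrable (fun y : Fin 2 → Ω => φ (y 0) (y 1)) (Measure.pi fun _ : Fin 2 => μ) :=
    int_of_Icc (meas_phi_pi hmeas 0 1) (fun y => hφ _ _)
  calc ∫ a, (∫ z, φ a z ∂μ) ∂μ
      = ∫ a, (∫ y : Fin 1 → Ω, φ a (y 0) ∂(Measure.pi fun _ : Fin 1 => μ)) ∂μ := by
        refine integral_congr_ae (ae_of_all _ fun a => ?_)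
        exact (integral_pi_one (fun z => φ a z)).symm
    _ = ∫ y : Fin 2 → Ω, φ (y 0) (y 1) ∂(Measure.pi fun _ : Fin 2 => μ) :=
        (integral_pi_peel _ hi1).symm
    _ = pa := h2

lemma mom_f2 (hn : 3 ≤ n) :
    ∫ a, (∫ z, φ a z ∂μ) * (∫ z, φ a z ∂μ) ∂μ = pa ^ 2 := by
  have hne : ((0:Fin 3),(1:Fin 3)) ∉ ({((0:Fin 3),(2:Fin 3))} : Finset (Fin 3 × Fin 3)) := by
    decide
  have h3 := momentK (n := n) hn hmeas hφ hrep
    ({((0 : Fin 3), (1 : Fin 3)), ((0 : Fin 3), (2 : Fin 3))} : Finset _)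
    (show ∀ p ∈ ({((0 : Fin 3), (1 : Fin 3)), ((0 : Fin 3), (2 : Fin 3))} : Finset _),
      p.1 ≠ p.2 by decide)
  have hc : ({((0 : Fin 3), (1 : Fin 3)), ((0 : Fin 3), (2 : Fin 3))} : Finset _).card = 2 := by
    decide
  rw [hc] at h3
  simp only [Finset.prod_insert hne, Finset.prod_singleton] at h3
  have hi3 : Integrable (fun y : Fin 3 → Ω => φ (y 0) (y 1) * φ (y 0) (y 2))
      (Measure.pi fun _ : Fin 3 => μ) :=
    int_of_Icc ((meas_phi_pi hmeas 0 1).mul (meas_phi_pi hmeas 0 2))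
      (fun y => Icc01_mul (hφ _ _) (hφ _ _))
  have hi2 : ∀ a : Ω, Integrable (fun y : Fin 2 → Ω => φ a (y 0) * φ a (y 1))
      (Measure.pi fun _ : Fin 2 => μ) := fun a =>
    int_of_Icc ((meas_phi_pi_left hmeas a 0).mul (meas_phi_pi_left hmeas a 1))
      (fun y => Icc01_mul (hφ _ _) (hφ _ _))
  calc ∫ a, (∫ z, φ a z ∂μ) * (∫ z, φ a z ∂μ) ∂μ
      = ∫ a, ∫ b, φ a b * (∫ z, φ a z ∂μ) ∂μ ∂μ := by
        refine integral_congr_ae (ae_of_all _ fun a => ?_)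
        exact (integral_mul_const _ _).symm
    _ = ∫ a, ∫ b, (∫ z, φ a b * φ a z ∂μ) ∂μ ∂μ := by
        refine integral_congr_ae (ae_of_all _ fun a => ?_)
        refine integral_congr_ae (ae_of_all _ fun b => ?_)
        exact (integral_const_mul _ _).symm
    _ = ∫ a, ∫ b, (∫ y : Fin 1 → Ω, φ a b * φ a (y 0) ∂(Measure.pi fun _ : Fin 1 => μ)) ∂μ ∂μ := by
        refine integral_congr_ae (ae_of_all _ fun a => ?_)
        refine integral_congr_ae (ae_of_all _ fun b => ?_)
        exact (integral_pi_one (fun z => φ a b * φ a z)).symm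
    _ = ∫ a, ∫ y : Fin 2 → Ω, φ a (y 0) * φ a (y 1) ∂(Measure.pi fun _ : Fin 2 => μ) ∂μ := by
        refine integral_congr_ae (ae_of_all _ fun a => ?_)
        exact (integral_pi_peel _ (hi2 a)).symm
    _ = ∫ y : Fin 3 → Ω, φ (y 0) (y 1) * φ (y 0) (y 2) ∂(Measure.pi fun _ : Fin 3 => μ) :=
        (integral_pi_peel _ hi3).symm
    _ = pa ^ 2 := h3

lemma mom_K (hn : 3 ≤ n) :
    ∫ a, ∫ b, (∫ z, φ a z * φ b z ∂μ) ∂μ ∂μ = pa ^ 2 := by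
  have hne : ((0:Fin 3),(2:Fin 3)) ∉ ({((1:Fin 3),(2:Fin 3))} : Finset (Fin 3 × Fin 3)) := by
    decide
  have h3 := momentK (n := n) hn hmeas hφ hrep
    ({((0 : Fin 3), (2 : Fin 3)), ((1 : Fin 3), (2 : Fin 3))} : Finset _)
    (show ∀ p ∈ ({((0 : Fin 3), (2 : Fin 3)), ((1 : Fin 3), (2 : Fin 3))} : Finset _),
      p.1 ≠ p.2 by decide)
  have hc : ({((0 : Fin 3), (2 : Fin 3)), ((1 : Fin 3), (2 : Fin 3))} : Finset _).card = 2 := by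
    decide
  rw [hc] at h3
  simp only [Finset.prod_insert hne, Finset.prod_singleton] at h3
  have hi3 : Integrable (fun y : Fin 3 → Ω => φ (y 0) (y 2) * φ (y 1) (y 2))
      (Measure.pi fun _ : Fin 3 => μ) :=
    int_of_Icc ((meas_phi_pi hmeas 0 2).mul (meas_phi_pi hmeas 1 2))
      (fun y => Icc01_mul (hφ _ _) (hφ _ _))
  have hi2 : ∀ a : Ω, Integrable (fun y : Fin 2 → Ω => φ a (y 1) * φ (y 0) (y 1))
      (Measure.pi fun _ : Fin 2 => μ) := fun a =>
    int_of_Icc ((meas_phi_pi_left hmeas a 1).mul (meas_phi_pi hmeas 0 1))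
      (fun y => Icc01_mul (hφ _ _) (hφ _ _))
  calc ∫ a, ∫ b, (∫ z, φ a z * φ b z ∂μ) ∂μ ∂μ
      = ∫ a, ∫ b, (∫ y : Fin 1 → Ω, φ a (y 0) * φ b (y 0) ∂(Measure.pi fun _ : Fin 1 => μ)) ∂μ ∂μ := by
        refine integral_congr_ae (ae_of_all _ fun a => ?_)
        refine integral_congr_ae (ae_of_all _ fun b => ?_)
        exact (integral_pi_one (fun z => φ a z * φ b z)).symm
    _ = ∫ a, ∫ y : Fin 2 → Ω, φ a (y 1) * φ (y 0) (y 1) ∂(Measure.pi fun _ : Fin 2 => μ) ∂μ := by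
        refine integral_congr_ae (ae_of_all _ fun a => ?_)
        exact (integral_pi_peel _ (hi2 a)).symm
    _ = ∫ y : Fin 3 → Ω, φ (y 0) (y 2) * φ (y 1) (y 2) ∂(Measure.pi fun _ : Fin 3 => μ) :=
        (integral_pi_peel _ hi3).symm
    _ = pa ^ 2 := h3

lemma mom_K2 (hn : 4 ≤ n) :
    ∫ a, ∫ b, (∫ z, φ a z * φ b z ∂μ) * (∫ z, φ a z * φ b z ∂μ) ∂μ ∂μ = pa ^ 4 := by
  have h4 := momentK (n := n) hn hmeas hφ hrep
    ({((0:Fin 4),(2:Fin 4)), ((1:Fin 4),(2:Fin 4)), ((0:Fin 4),(3:Fin 4)),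
      ((1:Fin 4),(3:Fin 4))} : Finset _)
    (show ∀ p ∈ ({((0:Fin 4),(2:Fin 4)), ((1:Fin 4),(2:Fin 4)), ((0:Fin 4),(3:Fin 4)),
      ((1:Fin 4),(3:Fin 4))} : Finset _), p.1 ≠ p.2 by decide)
  have hc : ({((0:Fin 4),(2:Fin 4)), ((1:Fin 4),(2:Fin 4)), ((0:Fin 4),(3:Fin 4)),
      ((1:Fin 4),(3:Fin 4))} : Finset _).card = 4 := by decide
  rw [hc] at h4
  have hne1 : ((0:Fin 4),(2:Fin 4)) ∉
      ({((1:Fin 4),(2:Fin 4)), ((0:Fin 4),(3:Fin 4)), ((1:Fin 4),(3:Fin 4))} :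
        Finset (Fin 4 × Fin 4)) := by decide
  have hne2 : ((1:Fin 4),(2:Fin 4)) ∉
      ({((0:Fin 4),(3:Fin 4)), ((1:Fin 4),(3:Fin 4))} : Finset (Fin 4 × Fin 4)) := by decide
  have hne3 : ((0:Fin 4),(3:Fin 4)) ∉
      ({((1:Fin 4),(3:Fin 4))} : Finset (Fin 4 × Fin 4)) := by decide
  simp only [Finset.prod_insert hne1, Finset.prod_insert hne2, Finset.prod_insert hne3,
    Finset.prod_singleton] at h4
  have hi4 : Integrable (fun y : Fin 4 → Ω =>
      φ (y 0) (y 2) * (φ (y 1) (y 2) * (φ (y 0) (y 3) * φ (y 1) (y 3))))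
      (Measure.pi fun _ : Fin 4 => μ) :=
    int_of_Icc ((meas_phi_pi hmeas 0 2).mul ((meas_phi_pi hmeas 1 2).mul
        ((meas_phi_pi hmeas 0 3).mul (meas_phi_pi hmeas 1 3))))
      (fun y => Icc01_mul (hφ _ _) (Icc01_mul (hφ _ _) (Icc01_mul (hφ _ _) (hφ _ _))))
  have hi3 : ∀ a : Ω, Integrable (fun y : Fin 3 → Ω =>
      φ a (y 1) * (φ (y 0) (y 1) * (φ a (y 2) * φ (y 0) (y 2))))
      (Measure.pi fun _ : Fin 3 => μ) := fun a =>
    int_of_Icc ((meas_phi_pi_left hmeas a 1).mul ((meas_phi_pi hmeas 0 1).mul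
        ((meas_phi_pi_left hmeas a 2).mul (meas_phi_pi hmeas 0 2))))
      (fun y => Icc01_mul (hφ _ _) (Icc01_mul (hφ _ _) (Icc01_mul (hφ _ _) (hφ _ _))))
  have hi2 : ∀ a b : Ω, Integrable (fun y : Fin 2 → Ω =>
      φ a (y 0) * (φ b (y 0) * (φ a (y 1) * φ b (y 1))))
      (Measure.pi fun _ : Fin 2 => μ) := fun a b =>
    int_of_Icc ((meas_phi_pi_left hmeas a 0).mul ((meas_phi_pi_left hmeas b 0).mul
        ((meas_phi_pi_left hmeas a 1).mul (meas_phi_pi_left hmeas b 1))))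
      (fun y => Icc01_mul (hφ _ _) (Icc01_mul (hφ _ _) (Icc01_mul (hφ _ _) (hφ _ _))))
  calc ∫ a, ∫ b, (∫ z, φ a z * φ b z ∂μ) * (∫ z, φ a z * φ b z ∂μ) ∂μ ∂μ
      = ∫ a, ∫ b, ∫ c, (φ a c * φ b c) * (∫ z, φ a z * φ b z ∂μ) ∂μ ∂μ ∂μ := by
        refine integral_congr_ae (ae_of_all _ fun a => ?_)
        refine integral_congr_ae (ae_of_all _ fun b => ?_)
        exact (integral_mul_const _ _).symm
    _ = ∫ a, ∫ b, ∫ c, ∫ z, (φ a c * φ b c) * (φ a z * φ b z) ∂μ ∂μ ∂μ ∂μ := by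
        refine integral_congr_ae (ae_of_all _ fun a => ?_)
        refine integral_congr_ae (ae_of_all _ fun b => ?_)
        refine integral_congr_ae (ae_of_all _ fun c => ?_)
        exact (integral_const_mul _ _).symm
    _ = ∫ a, ∫ b, ∫ c, ∫ z, φ a c * (φ b c * (φ a z * φ b z)) ∂μ ∂μ ∂μ ∂μ := by
        refine integral_congr_ae (ae_of_all _ fun a => ?_)
        refine integral_congr_ae (ae_of_all _ fun b => ?_)
        refine integral_congr_ae (ae_of_all _ fun c => ?_)
        refine integral_congr_ae (ae_of_all _ fun z => ?_)
        ring
    _ = ∫ a, ∫ b, ∫ c, ∫ y : Fin 1 → Ω, φ a c * (φ b c * (φ a (y 0) * φ b (y 0)))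
          ∂(Measure.pi fun _ : Fin 1 => μ) ∂μ ∂μ ∂μ := by
        refine integral_congr_ae (ae_of_all _ fun a => ?_)
        refine integral_congr_ae (ae_of_all _ fun b => ?_)
        refine integral_congr_ae (ae_of_all _ fun c => ?_)
        exact (integral_pi_one (fun z => φ a c * (φ b c * (φ a z * φ b z)))).symm
    _ = ∫ a, ∫ b, ∫ y : Fin 2 → Ω, φ a (y 0) * (φ b (y 0) * (φ a (y 1) * φ b (y 1)))
          ∂(Measure.pi fun _ : Fin 2 => μ) ∂μ ∂μ := by
        refine integral_congr_ae (ae_of_all _ fun a => ?_)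
        refine integral_congr_ae (ae_of_all _ fun b => ?_)
        exact (integral_pi_peel _ (hi2 a b)).symm
    _ = ∫ a, ∫ y : Fin 3 → Ω, φ a (y 1) * (φ (y 0) (y 1) * (φ a (y 2) * φ (y 0) (y 2)))
          ∂(Measure.pi fun _ : Fin 3 => μ) ∂μ := by
        refine integral_congr_ae (ae_of_all _ fun a => ?_)
        exact (integral_pi_peel _ (hi3 a)).symm
    _ = ∫ y : Fin 4 → Ω, φ (y 0) (y 2) * (φ (y 1) (y 2) * (φ (y 0) (y 3) * φ (y 1) (y 3)))
          ∂(Measure.pi fun _ : Fin 4 => μ) := (integral_pi_peel _ hi4).symm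
    _ = pa ^ 4 := h4

end Aux4
section Final
variable {Ω : Type*} [MeasurableSpace Ω] {μ : Measure Ω} [IsProbabilityMeasure μ]
variable {φ : Ω → Ω → ℝ} {n : ℕ} {pa : ℝ}

lemma lift_fst {g : Ω → ℝ} (hg : Measurable g) {c : ℝ} (h : ∀ᵐ a ∂μ, g a = c) :
    ∀ᵐ q ∂(μ.prod μ), g q.1 = c := by
  rw [ae_iff] at h ⊢
  have hset : {q : Ω × Ω | ¬ g q.1 = c} = {a | ¬ g a = c} ×ˢ Set.univ := by
    ext q; simp [Set.mem_prod]
  rw [hset, Measure.prod_prod, h, zero_mul]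

lemma lift_snd {g : Ω → ℝ} (hg : Measurable g) {c : ℝ} (h : ∀ᵐ a ∂μ, g a = c) :
    ∀ᵐ q ∂(μ.prod μ), g q.2 = c := by
  rw [ae_iff] at h ⊢
  have hset : {q : Ω × Ω | ¬ g q.2 = c} = Set.univ ×ˢ {a | ¬ g a = c} := by
    ext q; simp [Set.mem_prod]
  rw [hset, Measure.prod_prod, h, mul_zero]

variable (hmeas : Measurable (Function.uncurry φ)) (hφ : ∀ x y, φ x y ∈ Set.Icc (0:ℝ) 1)
variable (hrep : ∀ A : Finset (Fin n × Fin n), IsDigraph A →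
      pa ^ A.card * (1 - pa) ^ (n * (n - 1) - A.card) = vardP μ φ A)

include hmeas hφ hrep

lemma f_ae (hn : 3 ≤ n) : ∀ᵐ a ∂μ, (∫ z, φ a z ∂μ) = pa := by
  have hfm : Measurable fun a => ∫ z, φ a z ∂μ :=
    hmeas.stronglyMeasurable.integral_prod_right'.measurable
  have hfIcc : ∀ a, (∫ z, φ a z ∂μ) ∈ Set.Icc (0:ℝ) 1 := by
    intro a
    refine ⟨integral_nonneg (fun z => (hφ a z).1), ?_⟩
    calc (∫ z, φ a z ∂μ) ≤ ∫ _z, (1:ℝ) ∂μ :=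
          integral_mono (int_of_Icc (meas_phi_left hmeas a) (hφ a)) (integrable_const 1)
            (fun z => (hφ a z).2)
      _ = 1 := by simp
  have hif : Integrable (fun a => ∫ z, φ a z ∂μ) μ := int_of_Icc hfm hfIcc
  have hif2 : Integrable (fun a => (∫ z, φ a z ∂μ) * (∫ z, φ a z ∂μ)) μ :=
    int_of_Icc (hfm.mul hfm) (fun a => Icc01_mul (hfIcc a) (hfIcc a))
  have hsq : Integrable (fun a => ((∫ z, φ a z ∂μ) - pa)^2) μ :=
    ((hif2.sub (hif.const_mul (2*pa))).add (integrable_const (pa^2))).congr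
      (ae_of_all _ fun a => by simp only [Pi.add_apply, Pi.sub_apply]; ring)
  have key : ∫ a, ((∫ z, φ a z ∂μ) - pa)^2 ∂μ = 0 := by
    have e1 : ∫ a, ((∫ z, φ a z ∂μ) - pa)^2 ∂μ
        = ∫ a, ((∫ z, φ a z ∂μ) * (∫ z, φ a z ∂μ) - (2*pa) * (∫ z, φ a z ∂μ) + pa^2) ∂μ :=
      integral_congr_ae (ae_of_all _ fun a => by ring)
    rw [e1,
      integral_add (f := fun a => (∫ z, φ a z ∂μ) * (∫ z, φ a z ∂μ) - (2*pa) * (∫ z, φ a z ∂μ))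
        (g := fun _ => pa^2) (hif2.sub (hif.const_mul (2*pa))) (integrable_const _),
      integral_sub (f := fun a => (∫ z, φ a z ∂μ) * (∫ z, φ a z ∂μ))
        (g := fun a => (2*pa) * (∫ z, φ a z ∂μ)) hif2 (hif.const_mul (2*pa)),
      integral_const_mul, mom_f2 hmeas hφ hrep hn, mom_f hmeas hφ hrep (by omega : 2 ≤ n),
      integral_const]
    simp only [probReal_univ, smul_eq_mul, one_mul]
    ring
  have h0 := (integral_eq_zero_iff_of_nonneg (fun a => sq_nonneg _) hsq).mp key
  filter_upwards [h0] with a ha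
  simp only [Pi.zero_apply] at ha
  have h2 := sq_eq_zero_iff.mp ha
  linarith [h2]

lemma H_ae (hpa0 : 0 < pa) (hn : 4 ≤ n) :
    (fun q : Ω × Ω => ∫ z, (φ q.1 z - pa) * (φ q.2 z - pa) ∂μ) =ᵐ[μ.prod μ] 0 := by
  have hKm : Measurable (fun q : Ω × Ω => ∫ z, φ q.1 z * φ q.2 z ∂μ) :=
    ((hmeas.comp ((measurable_fst.fst).prodMk measurable_snd)).mul
      (hmeas.comp ((measurable_fst.snd).prodMk measurable_snd))).stronglyMeasurable.integral_prod_right'.measurable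
  have hiK : ∀ q : Ω × Ω, Integrable (fun z => φ q.1 z * φ q.2 z) μ := fun q =>
    int_of_Icc ((meas_phi_left hmeas q.1).mul (meas_phi_left hmeas q.2))
      (fun z => Icc01_mul (hφ _ _) (hφ _ _))
  have hKIcc : ∀ q : Ω × Ω, (∫ z, φ q.1 z * φ q.2 z ∂μ) ∈ Set.Icc (0:ℝ) 1 := by
    intro q
    refine ⟨integral_nonneg (fun z => (Icc01_mul (hφ _ _) (hφ _ _)).1), ?_⟩
    calc (∫ z, φ q.1 z * φ q.2 z ∂μ) ≤ ∫ _z, (1:ℝ) ∂μ :=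
          integral_mono (hiK q) (integrable_const 1) (fun z => (Icc01_mul (hφ _ _) (hφ _ _)).2)
      _ = 1 := by simp
  have hKint : Integrable (fun q : Ω × Ω => ∫ z, φ q.1 z * φ q.2 z ∂μ) (μ.prod μ) :=
    int_of_Icc hKm hKIcc
  have hK2int : Integrable (fun q : Ω × Ω =>
      (∫ z, φ q.1 z * φ q.2 z ∂μ) * (∫ z, φ q.1 z * φ q.2 z ∂μ)) (μ.prod μ) :=
    int_of_Icc (hKm.mul hKm) (fun q => Icc01_mul (hKIcc q) (hKIcc q))
  have hKprod : ∫ q, (∫ z, φ q.1 z * φ q.2 z ∂μ) ∂(μ.prod μ) = pa^2 := by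
    rw [integral_prod _ hKint]
    exact mom_K hmeas hφ hrep (by omega)
  have hK2prod : ∫ q, (∫ z, φ q.1 z * φ q.2 z ∂μ) * (∫ z, φ q.1 z * φ q.2 z ∂μ) ∂(μ.prod μ)
      = pa^4 := by
    rw [integral_prod _ hK2int]
    exact mom_K2 hmeas hφ hrep hn
  have hsq : Integrable (fun q : Ω × Ω => ((∫ z, φ q.1 z * φ q.2 z ∂μ) - pa^2)^2) (μ.prod μ) :=
    ((hK2int.sub (hKint.const_mul (2*pa^2))).add (integrable_const ((pa^2)^2))).congr
      (ae_of_all _ fun q => by simp only [Pi.add_apply, Pi.sub_apply]; ring)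
  have key : ∫ q, ((∫ z, φ q.1 z * φ q.2 z ∂μ) - pa^2)^2 ∂(μ.prod μ) = 0 := by
    have e1 : ∫ q, ((∫ z, φ q.1 z * φ q.2 z ∂μ) - pa^2)^2 ∂(μ.prod μ)
        = ∫ q, ((∫ z, φ q.1 z * φ q.2 z ∂μ) * (∫ z, φ q.1 z * φ q.2 z ∂μ)
            - (2*pa^2) * (∫ z, φ q.1 z * φ q.2 z ∂μ) + (pa^2)^2) ∂(μ.prod μ) :=
      integral_congr_ae (ae_of_all _ fun q => by ring)
    rw [e1,
      integral_add (f := fun q : Ω × Ω => (∫ z, φ q.1 z * φ q.2 z ∂μ) * (∫ z, φ q.1 z * φ q.2 z ∂μ)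
          - (2*pa^2) * (∫ z, φ q.1 z * φ q.2 z ∂μ))
        (g := fun _ => (pa^2)^2) (hK2int.sub (hKint.const_mul (2*pa^2)))
        (integrable_const _),
      integral_sub (f := fun q : Ω × Ω => (∫ z, φ q.1 z * φ q.2 z ∂μ) * (∫ z, φ q.1 z * φ q.2 z ∂μ))
        (g := fun q : Ω × Ω => (2*pa^2) * (∫ z, φ q.1 z * φ q.2 z ∂μ))
        hK2int (hKint.const_mul (2*pa^2)),
      integral_const_mul, hK2prod, hKprod, integral_const]
    simp only [probReal_univ, smul_eq_mul, one_mul]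
    ring
  have hK_ae := (integral_eq_zero_iff_of_nonneg (fun q => sq_nonneg _) hsq).mp key
  have hfm : Measurable fun a => ∫ z, φ a z ∂μ :=
    hmeas.stronglyMeasurable.integral_prod_right'.measurable
  have hf1 := lift_fst (μ := μ) hfm (f_ae hmeas hφ hrep (by omega))
  have hf2 := lift_snd (μ := μ) hfm (f_ae hmeas hφ hrep (by omega))
  have hexp : ∀ q : Ω × Ω, ∫ z, (φ q.1 z - pa) * (φ q.2 z - pa) ∂μ
      = (∫ z, φ q.1 z * φ q.2 z ∂μ) - pa * (∫ z, φ q.1 z ∂μ)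
        - pa * (∫ z, φ q.2 z ∂μ) + pa^2 := by
    intro q
    have i2 : Integrable (φ q.1) μ := int_of_Icc (meas_phi_left hmeas q.1) (hφ q.1)
    have i3 : Integrable (φ q.2) μ := int_of_Icc (meas_phi_left hmeas q.2) (hφ q.2)
    calc ∫ z, (φ q.1 z - pa) * (φ q.2 z - pa) ∂μ
        = ∫ z, (φ q.1 z * φ q.2 z - pa * φ q.1 z - pa * φ q.2 z + pa^2) ∂μ :=
          integral_congr_ae (ae_of_all _ fun z => by ring)
      _ = (∫ z, φ q.1 z * φ q.2 z ∂μ) - pa * (∫ z, φ q.1 z ∂μ)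
            - pa * (∫ z, φ q.2 z ∂μ) + pa^2 := by
          rw [integral_add (f := fun z => φ q.1 z * φ q.2 z - pa * φ q.1 z - pa * φ q.2 z)
              (g := fun _ => pa^2)
              (((hiK q).sub (i2.const_mul pa)).sub (i3.const_mul pa)) (integrable_const _),
            integral_sub (f := fun z => φ q.1 z * φ q.2 z - pa * φ q.1 z)
              (g := fun z => pa * φ q.2 z)
              ((hiK q).sub (i2.const_mul pa)) (i3.const_mul pa),
            integral_sub (f := fun z => φ q.1 z * φ q.2 z) (g := fun z => pa * φ q.1 z)
              (hiK q) (i2.const_mul pa),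
            integral_const_mul, integral_const_mul, integral_const]
          simp only [probReal_univ, smul_eq_mul, one_mul]
  filter_upwards [hK_ae, hf1, hf2] with q h1 h2 h3
  simp only [Pi.zero_apply] at h1 ⊢
  have h1' := sq_eq_zero_iff.mp h1
  rw [hexp q, h2, h3]
  nlinarith [h1']

end Final
section Final2
variable {Ω : Type*} [MeasurableSpace Ω] {μ : Measure Ω} [IsProbabilityMeasure μ]
variable {φ : Ω → Ω → ℝ} {pa : ℝ}

lemma gE_ae (hmeas : Measurable (Function.uncurry φ)) (hφ : ∀ x y, φ x y ∈ Set.Icc (0:ℝ) 1)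
    (hpa0 : 0 < pa) (hpa1 : pa < 1)
    (hH : (fun q : Ω × Ω => ∫ z, (φ q.1 z - pa) * (φ q.2 z - pa) ∂μ) =ᵐ[μ.prod μ] 0)
    {E : Set Ω} (hE : MeasurableSet E) :
    (fun z => ∫ x, (φ x z - pa) * E.indicator (fun _ => (1:ℝ)) x ∂μ) =ᵐ[μ] 0 := by
  set ψ : Ω → ℝ := E.indicator (fun _ => (1:ℝ)) with hψdef
  have hψm : Measurable ψ := measurable_const.indicator hE
  have hψb : ∀ x, |ψ x| ≤ 1 := by
    intro x
    by_cases h : x ∈ E <;> simp [hψdef, Set.indicator_of_mem, Set.indicator_of_notMem, h]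
  have hsb : ∀ x z, |φ x z - pa| ≤ 1 := fun x z =>
    abs_le.mpr ⟨by linarith [(hφ x z).1], by linarith [(hφ x z).2]⟩
  have hub : ∀ x z, |(φ x z - pa) * ψ x| ≤ 1 := fun x z => by
    rw [abs_mul]
    exact mul_le_one₀ (hsb x z) (abs_nonneg _) (hψb x)
  have hum : Measurable fun r : Ω × Ω => (φ r.2 r.1 - pa) * ψ r.2 :=
    ((hmeas.comp (measurable_snd.prodMk measurable_fst)).sub measurable_const).mul
      (hψm.comp measurable_snd)
  have hWm : Measurable (fun r : (Ω × Ω) × Ω =>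
      ((φ r.1.1 r.2 - pa) * ψ r.1.1) * ((φ r.1.2 r.2 - pa) * ψ r.1.2)) := by
    have m1 : Measurable fun r : (Ω × Ω) × Ω => φ r.1.1 r.2 :=
      hmeas.comp ((measurable_fst.fst).prodMk measurable_snd)
    have m2 : Measurable fun r : (Ω × Ω) × Ω => φ r.1.2 r.2 :=
      hmeas.comp ((measurable_fst.snd).prodMk measurable_snd)
    exact ((m1.sub measurable_const).mul (hψm.comp measurable_fst.fst)).mul
      ((m2.sub measurable_const).mul (hψm.comp measurable_fst.snd))
  have hWint : Integrable (fun r : (Ω × Ω) × Ω =>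
      ((φ r.1.1 r.2 - pa) * ψ r.1.1) * ((φ r.1.2 r.2 - pa) * ψ r.1.2))
      ((μ.prod μ).prod μ) :=
    integrable_of_bdd hWm (fun r => by
      rw [abs_mul]
      exact mul_le_one₀ (hub _ _) (abs_nonneg _) (hub _ _))
  have hHib : ∀ q : Ω × Ω, Integrable (fun z => (φ q.1 z - pa) * (φ q.2 z - pa)) μ :=
    fun q => integrable_of_bdd
      (((meas_phi_left hmeas q.1).sub measurable_const).mul
        ((meas_phi_left hmeas q.2).sub measurable_const))
      (fun z => by rw [abs_mul]; exact mul_le_one₀ (hsb _ _) (abs_nonneg _) (hsb _ _))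
  have step1 : ∫ q, (∫ z, (φ q.1 z - pa) * (φ q.2 z - pa) ∂μ) * (ψ q.1 * ψ q.2)
      ∂(μ.prod μ) = 0 := by
    refine integral_eq_zero_of_ae ?_
    filter_upwards [hH] with q hq
    simp only [Pi.zero_apply] at hq ⊢
    rw [hq, zero_mul]
  have step2 : ∫ q, (∫ z, (φ q.1 z - pa) * (φ q.2 z - pa) ∂μ) * (ψ q.1 * ψ q.2) ∂(μ.prod μ)
      = ∫ z, (∫ x, (φ x z - pa) * ψ x ∂μ) * (∫ x, (φ x z - pa) * ψ x ∂μ) ∂μ := by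
    calc ∫ q, (∫ z, (φ q.1 z - pa) * (φ q.2 z - pa) ∂μ) * (ψ q.1 * ψ q.2) ∂(μ.prod μ)
        = ∫ q, ∫ z, ((φ q.1 z - pa) * ψ q.1) * ((φ q.2 z - pa) * ψ q.2) ∂μ ∂(μ.prod μ) := by
          refine integral_congr_ae (ae_of_all _ fun q => ?_)
          show (∫ z, (φ q.1 z - pa) * (φ q.2 z - pa) ∂μ) * (ψ q.1 * ψ q.2)
            = ∫ z, ((φ q.1 z - pa) * ψ q.1) * ((φ q.2 z - pa) * ψ q.2) ∂μ
          rw [← integral_mul_const]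
          exact integral_congr_ae (ae_of_all _ fun z => by ring)
      _ = ∫ z, ∫ q, ((φ q.1 z - pa) * ψ q.1) * ((φ q.2 z - pa) * ψ q.2) ∂(μ.prod μ) ∂μ :=
          integral_integral_swap hWint
      _ = ∫ z, (∫ x, (φ x z - pa) * ψ x ∂μ) * (∫ x, (φ x z - pa) * ψ x ∂μ) ∂μ := by
          refine integral_congr_ae (ae_of_all _ fun z => ?_)
          exact integral_prod_mul (f := fun x => (φ x z - pa) * ψ x)
            (g := fun x => (φ x z - pa) * ψ x)
  have hgm : Measurable fun z => ∫ x, (φ x z - pa) * ψ x ∂μ :=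
    hum.stronglyMeasurable.integral_prod_right'.measurable
  have hgb : ∀ z, |∫ x, (φ x z - pa) * ψ x ∂μ| ≤ 1 := by
    intro z
    have := norm_integral_le_of_norm_le_const (μ := μ) (C := 1)
      (f := fun x => (φ x z - pa) * ψ x) (ae_of_all _ fun x => by rw [Real.norm_eq_abs]; exact hub x z)
    simpa using this
  have hggint : Integrable (fun z => (∫ x, (φ x z - pa) * ψ x ∂μ) * (∫ x, (φ x z - pa) * ψ x ∂μ)) μ :=
    integrable_of_bdd (hgm.mul hgm) (fun z => by
      rw [abs_mul]
      exact mul_le_one₀ (hgb z) (abs_nonneg _) (hgb z))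
  have key : ∫ z, (∫ x, (φ x z - pa) * ψ x ∂μ) * (∫ x, (φ x z - pa) * ψ x ∂μ) ∂μ = 0 := by
    rw [← step2]; exact step1
  have h0 := (integral_eq_zero_iff_of_nonneg (fun z => mul_self_nonneg _) hggint).mp key
  filter_upwards [h0] with z hz
  simp only [Pi.zero_apply] at hz ⊢
  exact mul_self_eq_zero.mp hz

lemma rect_zero (hmeas : Measurable (Function.uncurry φ)) (hφ : ∀ x y, φ x y ∈ Set.Icc (0:ℝ) 1)
    (hpa0 : 0 < pa) (hpa1 : pa < 1)
    (hH : (fun q : Ω × Ω => ∫ z, (φ q.1 z - pa) * (φ q.2 z - pa) ∂μ) =ᵐ[μ.prod μ] 0)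
    {E F : Set Ω} (hE : MeasurableSet E) (hF : MeasurableSet F) :
    ∫ q : Ω × Ω, (φ q.1 q.2 - pa) *
      (E.indicator (fun _ => (1:ℝ)) q.1 * F.indicator (fun _ => (1:ℝ)) q.2) ∂(μ.prod μ) = 0 := by
  set ψE : Ω → ℝ := E.indicator (fun _ => (1:ℝ)) with hψEdef
  set ψF : Ω → ℝ := F.indicator (fun _ => (1:ℝ)) with hψFdef
  have hψEm : Measurable ψE := measurable_const.indicator hE
  have hψFm : Measurable ψF := measurable_const.indicator hF
  have hψEb : ∀ x, |ψE x| ≤ 1 := by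
    intro x; by_cases h : x ∈ E <;> simp [hψEdef, h]
  have hψFb : ∀ x, |ψF x| ≤ 1 := by
    intro x; by_cases h : x ∈ F <;> simp [hψFdef, h]
  have hsb : ∀ x z, |φ x z - pa| ≤ 1 := fun x z =>
    abs_le.mpr ⟨by linarith [(hφ x z).1], by linarith [(hφ x z).2]⟩
  have hm0 : Measurable fun q : Ω × Ω => φ q.1 q.2 := hmeas
  have hint : Integrable (fun q : Ω × Ω => (φ q.1 q.2 - pa) * (ψE q.1 * ψF q.2)) (μ.prod μ) :=
    integrable_of_bdd ((hm0.sub measurable_const).mul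
        ((hψEm.comp measurable_fst).mul (hψFm.comp measurable_snd)))
      (fun q => by
        rw [abs_mul, abs_mul]
        exact mul_le_one₀ (hsb _ _) (mul_nonneg (abs_nonneg _) (abs_nonneg _))
          (mul_le_one₀ (hψEb _) (abs_nonneg _) (hψFb _)))
  have hg := gE_ae hmeas hφ hpa0 hpa1 hH hE
  calc ∫ q : Ω × Ω, (φ q.1 q.2 - pa) * (ψE q.1 * ψF q.2) ∂(μ.prod μ)
      = ∫ x, ∫ z, (φ x z - pa) * (ψE x * ψF z) ∂μ ∂μ := integral_prod _ hint
    _ = ∫ z, ∫ x, (φ x z - pa) * (ψE x * ψF z) ∂μ ∂μ := integral_integral_swap hint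
    _ = ∫ z, (∫ x, (φ x z - pa) * ψE x ∂μ) * ψF z ∂μ := by
        refine integral_congr_ae (ae_of_all _ fun z => ?_)
        calc ∫ x, (φ x z - pa) * (ψE x * ψF z) ∂μ
            = ∫ x, ((φ x z - pa) * ψE x) * ψF z ∂μ :=
              integral_congr_ae (ae_of_all _ fun x => by ring)
          _ = (∫ x, (φ x z - pa) * ψE x ∂μ) * ψF z := integral_mul_const _ _
    _ = 0 := by
        refine integral_eq_zero_of_ae ?_
        filter_upwards [hg] with z hz
        simp only [Pi.zero_apply] at hz ⊢
        rw [hz, zero_mul]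

end Final2

/-- If an arc random digraph `D(n, p_a)` with `n ≥ 4` is represented as a vertex-arc random
digraph `D(n, Ω, μ, φ)`, then `φ = p_a` almost surely with respect to `μ × μ`. -/
theorem stmt2 {n : ℕ} (hn : 4 ≤ n) {pa : ℝ} (hpa0 : 0 < pa) (hpa1 : pa < 1)
    {Ω : Type*} [MeasurableSpace Ω] (μ : Measure Ω) [IsProbabilityMeasure μ]
    (φ : Ω → Ω → ℝ) (hmeas : Measurable (Function.uncurry φ))
    (hφ : ∀ x y, φ x y ∈ Set.Icc (0 : ℝ) 1)
    (hrep : ∀ A : Finset (Fin n × Fin n), IsDigraph A →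
      pa ^ A.card * (1 - pa) ^ (n * (n - 1) - A.card) = vardP μ φ A) :
    ∀ᵐ q ∂(μ.prod μ), φ q.1 q.2 = pa := by
  have hH := H_ae hmeas hφ hrep hpa0 hn
  have hm0 : Measurable fun q : Ω × Ω => φ q.1 q.2 := hmeas
  have hsb : ∀ x z, |φ x z - pa| ≤ 1 := fun x z =>
    abs_le.mpr ⟨by linarith [(hφ x z).1], by linarith [(hφ x z).2]⟩
  have hint : Integrable (fun q : Ω × Ω => φ q.1 q.2 - pa) (μ.prod μ) :=
    integrable_of_bdd (hm0.sub measurable_const) (fun q => hsb _ _)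
  have htot : ∫ q : Ω × Ω, (φ q.1 q.2 - pa) ∂(μ.prod μ) = 0 := by
    have h := rect_zero hmeas hφ hpa0 hpa1 hH MeasurableSet.univ MeasurableSet.univ
    simpa [Set.indicator_univ] using h
  have hall : ∀ ⦃C : Set (Ω × Ω)⦄, MeasurableSet C →
      ∫ q in C, (φ q.1 q.2 - pa) ∂(μ.prod μ) = 0 := by
    refine MeasurableSpace.induction_on_inter
      (C := fun t _ => ∫ q in t, (φ q.1 q.2 - pa) ∂(μ.prod μ) = 0)
      generateFrom_prod.symm isPiSystem_prod ?_ ?_ ?_ ?_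
    · simp
    · rintro t ⟨E, hE, F, hF, rfl⟩
      have hE' : MeasurableSet E := hE
      have hF' : MeasurableSet F := hF
      have heq : ∀ q : Ω × Ω, (E ×ˢ F).indicator (fun q : Ω × Ω => φ q.1 q.2 - pa) q
          = (φ q.1 q.2 - pa) *
            (E.indicator (fun _ => (1:ℝ)) q.1 * F.indicator (fun _ => (1:ℝ)) q.2) := by
        intro q
        by_cases h1 : q.1 ∈ E <;> by_cases h2 : q.2 ∈ F <;>
          simp [Set.indicator_apply, Set.mem_prod, h1, h2]
      rw [← integral_indicator (hE'.prod hF'), integral_congr_ae (ae_of_all _ heq)]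
      exact rect_zero hmeas hφ hpa0 hpa1 hH hE' hF'
    · intro t ht h0
      have hadd := integral_add_compl ht hint
      rw [h0, htot] at hadd
      linarith
    · intro g hd hm hC
      rw [integral_iUnion hm hd hint.integrableOn]
      simp [hC]
  have h0 := hint.ae_eq_zero_of_forall_setIntegral_eq_zero (fun s hs _ => hall hs)
  filter_upwards [h0] with q hq
  simp only [Pi.zero_apply] at hq
  linarith
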